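/- arXiv:1810.08356 — 5 statements merged into one kernel-verified Lean document; each statement's English description precedes it below -/
import Mathlib

section
/- Let T1, T2, T3, T4 be the continuous ℚ-algebra endomorphisms of R = ℚ[[x,y]] determined by the substitutions T1 : x ↦ x(1+y)⁻¹, y ↦ y; T2 : x ↦ x, y ↦ y(1+x)⁻¹; T3 : x ↦ x(1+y), y ↦ y; T4 : x ↦ x, y ↦ y(1+x). Then the composite T4 ∘ T3 ∘ T2 ∘ T1 satisfies (T4 ∘ T3 ∘ T2 ∘ T1)(x) = x(1+xy) and (T4 ∘ T3 ∘ T2 ∘ T1)(y) = y(1+xy)⁻¹. -/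
noncomputable section

namespace ScatteringWallCrossing

/-- `R = ℚ[[x,y]]`, formal power series in two variables over `ℚ`. -/
abbrev R : Type := MvPowerSeries (Fin 2) ℚ

/-- The variable `x`. -/
def x : R := MvPowerSeries.X 0

/-- The variable `y`. -/
def y : R := MvPowerSeries.X 1

/-- The coefficientwise topology on `ℚ[[x,y]]`: the product topology on
`((Fin 2) →₀ ℕ) → ℚ` with `ℚ` discrete.  A substitution endomorphism is the unique
*continuous* `ℚ`-algebra endomorphism with the prescribed values on `x` and `y`. -/
def coeffTopology : TopologicalSpace R :=
  @Pi.topologicalSpace ((Fin 2) →₀ ℕ) (fun _ => ℚ) (fun _ => ⊥)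

/-- `T` is a continuous `ℚ`-algebra endomorphism of `R` (for the coefficientwise
topology) sending `x ↦ u` and `y ↦ v`; i.e. `T` is the substitution endomorphism
determined by `x ↦ u`, `y ↦ v`. -/
def IsSubstEndo (T : R →ₐ[ℚ] R) (u v : R) : Prop :=
  @Continuous R R coeffTopology coeffTopology T ∧ T x = u ∧ T y = v

local notation "Cc" => (MvPowerSeries.constantCoeff : R →+* ℚ)

lemma Cx : Cc x = 0 := MvPowerSeries.constantCoeff_X 0
lemma Cy : Cc y = 0 := MvPowerSeries.constantCoeff_X 1

lemma hominv (T : R →ₐ[ℚ] R) {a : R} (ha : Cc a ≠ 0) (ha' : Cc (T a) ≠ 0) :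
    T a⁻¹ = (T a)⁻¹ := by
  rw [MvPowerSeries.eq_inv_iff_mul_eq_one ha', ← map_mul,
    MvPowerSeries.inv_mul_cancel _ ha, map_one]

lemma inv_eq {a b : R} (hb : Cc b ≠ 0) (h : a * b = 1) : b⁻¹ = a :=
  (MvPowerSeries.inv_eq_iff_mul_eq_one hb).2 h

lemma Cinv_ne {b : R} (hb : Cc b ≠ 0) : Cc b⁻¹ ≠ 0 := by
  intro h
  have h1 := congrArg Cc (MvPowerSeries.inv_mul_cancel b hb)
  rw [map_mul, h, zero_mul, map_one] at h1
  exact zero_ne_one h1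

lemma inv_mul_inv (a b : R) (ha : Cc a ≠ 0) (hb : Cc b ≠ 0) :
    (a * b⁻¹)⁻¹ = b * a⁻¹ := by
  apply inv_eq
  · rw [map_mul]
    exact mul_ne_zero ha (Cinv_ne hb)
  · have h1 : b * a⁻¹ * (a * b⁻¹) = (a⁻¹ * a) * (b * b⁻¹) := by ring
    rw [h1, MvPowerSeries.inv_mul_cancel _ ha, MvPowerSeries.mul_inv_cancel _ hb, one_mul]

/-- Let `T1, T2, T3, T4` be the continuous substitution endomorphisms of
`ℚ[[x,y]]` given by `T1 : x ↦ x(1+y)⁻¹, y ↦ y`; `T2 : x ↦ x, y ↦ y(1+x)⁻¹`;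
`T3 : x ↦ x(1+y), y ↦ y`; `T4 : x ↦ x, y ↦ y(1+x)` (the path-ordered wall crossings of
the scattering diagram with rays `(±1,0)` carrying `1+x` and `(0,±1)` carrying `1+y`).
Then `(T4 ∘ T3 ∘ T2 ∘ T1)(x) = x(1+xy)` and `(T4 ∘ T3 ∘ T2 ∘ T1)(y) = y(1+xy)⁻¹`,
exhibiting the missing outgoing ray carrying `1+xy`. -/
theorem pathOrderedProduct_four_walls (T1 T2 T3 T4 : R →ₐ[ℚ] R)
    (hT1 : IsSubstEndo T1 (x * (1 + y)⁻¹) y)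
    (hT2 : IsSubstEndo T2 x (y * (1 + x)⁻¹))
    (hT3 : IsSubstEndo T3 (x * (1 + y)) y)
    (hT4 : IsSubstEndo T4 x (y * (1 + x))) :
    (T4.comp (T3.comp (T2.comp T1))) x = x * (1 + x * y) ∧
      (T4.comp (T3.comp (T2.comp T1))) y = y * (1 + x * y)⁻¹ := by
  obtain ⟨-, t1x, t1y⟩ := hT1
  obtain ⟨-, t2x, t2y⟩ := hT2
  obtain ⟨-, t3x, t3y⟩ := hT3
  obtain ⟨-, t4x, t4y⟩ := hT4
  have n1x : Cc (1 + x) ≠ 0 := by simp [Cx]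
  have n1y : Cc (1 + y) ≠ 0 := by simp [Cy]
  have n1xY : Cc (1 + x + y) ≠ 0 := by simp [Cx, Cy]
  have nA : Cc (1 + x + x * y) ≠ 0 := by simp [Cx, Cy]
  -- the value of `T2 (1+y)`
  have e2 : T2 (1 + y) = 1 + y * (1 + x)⁻¹ := by rw [map_add, map_one, t2y]
  have h2 : Cc (T2 (1 + y)) ≠ 0 := by
    rw [e2]; simp [Cy]
  -- step 1
  have s1 : T2 (T1 x) = x * ((1 + x) * (1 + x + y)⁻¹) := by
    rw [t1x, map_mul, t2x, hominv T2 n1y h2, e2]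
    have key : (1 : R) + y * (1 + x)⁻¹ = (1 + x + y) * (1 + x)⁻¹ := by
      calc (1 : R) + y * (1 + x)⁻¹
          = (1 + x) * (1 + x)⁻¹ + y * (1 + x)⁻¹ := by
            rw [MvPowerSeries.mul_inv_cancel _ n1x]
        _ = (1 + x + y) * (1 + x)⁻¹ := by ring
    rw [key, inv_mul_inv _ _ n1xY n1x]
  have s1y : T2 (T1 y) = y * (1 + x)⁻¹ := by rw [t1y, t2y]
  -- the value of `T3 (1+x+y)` and `T3 (1+x)`
  have e3 : T3 (1 + x + y) = (1 + x) * (1 + y) := by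
    rw [map_add, map_add, map_one, t3x, t3y]; ring
  have h3 : Cc (T3 (1 + x + y)) ≠ 0 := by
    rw [e3, map_mul]; exact mul_ne_zero n1x n1y
  have e3x : T3 (1 + x) = 1 + x + x * y := by
    rw [map_add, map_one, t3x]; ring
  -- step 2
  have s2 : T3 (T2 (T1 x)) = x * ((1 + x + x * y) * (1 + x)⁻¹) := by
    rw [s1, map_mul, map_mul, t3x, e3x, hominv T3 n1xY h3, e3,
      MvPowerSeries.mul_inv_rev]
    have key : x * (1 + y) * ((1 + x + x * y) * ((1 + y)⁻¹ * (1 + x)⁻¹))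
        = x * ((1 + x + x * y) * (1 + x)⁻¹) * ((1 + y) * (1 + y)⁻¹) := by ring
    rw [key, MvPowerSeries.mul_inv_cancel _ n1y, mul_one]
  have s2y : T3 (T2 (T1 y)) = y * (1 + x + x * y)⁻¹ := by
    have h3' : Cc (T3 (1 + x)) ≠ 0 := by rw [e3x]; exact nA
    rw [s1y, map_mul, t3y, hominv T3 n1x h3', e3x]
  -- the value of `T4 (1+x+x*y)`
  have e4 : T4 (1 + x + x * y) = (1 + x) * (1 + x * y) := by
    rw [map_add, map_add, map_one, map_mul, t4x, t4y]; ring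
  have h4 : Cc (T4 (1 + x + x * y)) ≠ 0 := by
    rw [e4, map_mul]
    exact mul_ne_zero n1x (by simp [Cx, Cy])
  have e4x : T4 (1 + x) = 1 + x := by rw [map_add, map_one, t4x]
  have h4x : Cc (T4 (1 + x)) ≠ 0 := by rw [e4x]; exact n1x
  constructor
  · -- the `x` component
    simp only [AlgHom.comp_apply]
    rw [s2, map_mul, map_mul, t4x, e4, hominv T4 n1x h4x, e4x]
    have key : x * ((1 + x) * (1 + x * y) * (1 + x)⁻¹)
        = x * (1 + x * y) * ((1 + x) * (1 + x)⁻¹) := by ring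
    rw [key, MvPowerSeries.mul_inv_cancel _ n1x, mul_one]
  · -- the `y` component
    simp only [AlgHom.comp_apply]
    rw [s2y, map_mul, t4y, hominv T4 nA h4, e4, MvPowerSeries.mul_inv_rev]
    have key : y * (1 + x) * ((1 + x * y)⁻¹ * (1 + x)⁻¹)
        = y * (1 + x * y)⁻¹ * ((1 + x) * (1 + x)⁻¹) := by ring
    rw [key, MvPowerSeries.mul_inv_cancel _ n1x, mul_one]

end ScatteringWallCrossing
end
end

section
/- Let T1, T2, T3, T4, T5 be the continuous ℚ-algebra endomorphisms of R = ℚ[[x,y]] determined by the substitutions T1 : x ↦ x(1+y)⁻¹, y ↦ y; T2 : x ↦ x, y ↦ y(1+x)⁻¹; T3 : x ↦ x(1+y), y ↦ y; T4 : x ↦ x, y ↦ y(1+x); T5 : x ↦ x(1+xy)⁻¹, y ↦ y(1+xy). Then the composite T5 ∘ T4 ∘ T3 ∘ T2 ∘ T1 is the identity map of R; equivalently, it fixes both x and y. -/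
noncomputable section

namespace ScatteringWallCrossing

/-! ### Auxiliary lemmas -/

lemma cc_x : (MvPowerSeries.constantCoeff : R →+* ℚ) x = 0 := by
  simp [x]

lemma cc_y : (MvPowerSeries.constantCoeff : R →+* ℚ) y = 0 := by
  simp [y]

/-- In a power-series ring over a field, an element with a right inverse has that
right inverse as its `⁻¹`. -/
lemma inv_eq_of_mul_eq_one {a b : R} (h : a * b = 1) : a⁻¹ = b := by
  have ha : (MvPowerSeries.constantCoeff : R →+* ℚ) a ≠ 0 := by
    intro h0
    have h1 := congrArg ((MvPowerSeries.constantCoeff : R →+* ℚ)) h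
    rw [map_mul, map_one, h0, zero_mul] at h1
    exact zero_ne_one h1
  calc a⁻¹ = a⁻¹ * (a * b) := by rw [h, mul_one]
  _ = (a⁻¹ * a) * b := by ring
  _ = b := by rw [MvPowerSeries.inv_mul_cancel a ha, one_mul]

/-- Algebra endomorphisms commute with inversion of units. -/
lemma map_inv₁ (T : R →ₐ[ℚ] R) (u : R)
    (hu : (MvPowerSeries.constantCoeff : R →+* ℚ) u ≠ 0) :
    T u⁻¹ = (T u)⁻¹ := by
  have h : u * u⁻¹ = 1 := MvPowerSeries.mul_inv_cancel u hu
  have h2 : T u * T u⁻¹ = 1 := by rw [← map_mul, h, map_one]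
  exact (inv_eq_of_mul_eq_one h2).symm

/-- Convergence of coefficientwise-eventually-constant families. -/
lemma tendsto_coeffTopology (F : ((Fin 2) →₀ ℕ) → R) (f : R)
    (h : ∀ d : (Fin 2) →₀ ℕ, ∀ᶠ n in Filter.atTop,
      MvPowerSeries.coeff d (F n) = MvPowerSeries.coeff d f) :
    @Filter.Tendsto _ _ F Filter.atTop (@nhds R coeffTopology f) := by
  letI : TopologicalSpace ℚ := ⊥
  haveI : DiscreteTopology ℚ := ⟨rfl⟩
  have key : @Filter.Tendsto ((Fin 2) →₀ ℕ) (((Fin 2) →₀ ℕ) → ℚ) F Filter.atTop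
      (@nhds (((Fin 2) →₀ ℕ) → ℚ) Pi.topologicalSpace (f : ((Fin 2) →₀ ℕ) → ℚ)) := by
    refine tendsto_pi_nhds.2 ?_
    intro d
    rw [nhds_discrete, Filter.tendsto_pure]
    exact h d
  exact key

/-- The polynomials are dense in `R` for the coefficientwise topology. -/
lemma dense_polynomials :
    @Dense R coeffTopology
      (Set.range (fun p : MvPolynomial (Fin 2) ℚ => (p : R))) := by
  intro f
  letI : TopologicalSpace R := coeffTopology
  refine mem_closure_of_tendsto
    (tendsto_coeffTopology (fun n => ((MvPowerSeries.trunc ℚ n f : MvPolynomial (Fin 2) ℚ) : R)) f ?_)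
    (Filter.Eventually.of_forall fun n => Set.mem_range_self _)
  intro d
  have : ∀ n : (Fin 2) →₀ ℕ, d + (Finsupp.single 0 1 + Finsupp.single 1 1) ≤ n →
      MvPowerSeries.coeff d ((MvPowerSeries.trunc ℚ n f : MvPolynomial (Fin 2) ℚ) : R)
        = MvPowerSeries.coeff d f := by
    intro n hn
    rw [MvPolynomial.coeff_coe, MvPowerSeries.coeff_trunc, if_pos]
    refine lt_of_lt_of_le ?_ hn
    refine lt_of_le_of_ne (le_add_of_nonneg_right zero_le) ?_
    intro hdn
    have := congrFun (congrArg (fun g : (Fin 2) →₀ ℕ => (g : Fin 2 → ℕ)) hdn) 0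
    simp at this
  exact Filter.eventually_atTop.2 ⟨_, this⟩

/-- A continuous algebra endomorphism fixing `x` and `y` is the identity. -/
lemma eq_id_of_fix (T : R →ₐ[ℚ] R)
    (hc : @Continuous R R coeffTopology coeffTopology T)
    (hx : T x = x) (hy : T y = y) : T = AlgHom.id ℚ R := by
  have hX : ∀ i : Fin 2, T (MvPowerSeries.X i) = MvPowerSeries.X i := by
    intro i
    fin_cases i
    · exact hx
    · exact hy
  have hpoly : ∀ p : MvPolynomial (Fin 2) ℚ, T ((p : R)) = (p : R) := by
    intro p
    induction p using MvPolynomial.induction_on with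
    | C a =>
        rw [MvPolynomial.coe_C]
        have : (MvPowerSeries.C a : R) = algebraMap ℚ R a := rfl
        rw [this, T.commutes]
    | add p q hp hq => rw [MvPolynomial.coe_add, map_add, hp, hq]
    | mul_X p i hp => rw [MvPolynomial.coe_mul, MvPolynomial.coe_X, map_mul, hp, hX]
  have hEqOn : Set.EqOn (⇑T) (id : R → R)
      (Set.range (fun p : MvPolynomial (Fin 2) ℚ => (p : R))) := by
    rintro _ ⟨p, rfl⟩
    exact hpoly p
  letI : TopologicalSpace R := coeffTopology
  haveI : T2Space R := by
    letI : TopologicalSpace ℚ := ⊥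
    haveI : DiscreteTopology ℚ := ⟨rfl⟩
    have : T2Space (((Fin 2) →₀ ℕ) → ℚ) := inferInstance
    exact this
  have hfun : ⇑T = (id : R → R) :=
    Continuous.ext_on dense_polynomials hc continuous_id hEqOn
  exact AlgHom.ext fun f => congrFun hfun f

/-- Let `T1, …, T5` be the continuous substitution endomorphisms of
`ℚ[[x,y]]` given by `T1 : x ↦ x(1+y)⁻¹, y ↦ y`; `T2 : x ↦ x, y ↦ y(1+x)⁻¹`;
`T3 : x ↦ x(1+y), y ↦ y`; `T4 : x ↦ x, y ↦ y(1+x)`; `T5 : x ↦ x(1+xy)⁻¹, y ↦ y(1+xy)`.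
Then `T5 ∘ T4 ∘ T3 ∘ T2 ∘ T1` is the identity map of `R`; equivalently it fixes both `x`
and `y`.  This is the consistency of the scattering diagram with five rays: `(±1,0)`
carrying `1+x`, `(0,±1)` carrying `1+y`, and the outgoing ray through `(-1,-1)`
carrying `1+xy`. -/
theorem consistency_five_walls (T1 T2 T3 T4 T5 : R →ₐ[ℚ] R)
    (hT1 : IsSubstEndo T1 (x * (1 + y)⁻¹) y)
    (hT2 : IsSubstEndo T2 x (y * (1 + x)⁻¹))
    (hT3 : IsSubstEndo T3 (x * (1 + y)) y)
    (hT4 : IsSubstEndo T4 x (y * (1 + x)))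
    (hT5 : IsSubstEndo T5 (x * (1 + x * y)⁻¹) (y * (1 + x * y))) :
    T5.comp (T4.comp (T3.comp (T2.comp T1))) = AlgHom.id ℚ R ∧
      (T5.comp (T4.comp (T3.comp (T2.comp T1)))) x = x ∧
      (T5.comp (T4.comp (T3.comp (T2.comp T1)))) y = y := by
  obtain ⟨c1, h1x, h1y⟩ := hT1
  obtain ⟨c2, h2x, h2y⟩ := hT2
  obtain ⟨c3, h3x, h3y⟩ := hT3
  obtain ⟨c4, h4x, h4y⟩ := hT4
  obtain ⟨c5, h5x, h5y⟩ := hT5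
  -- constant-coefficient facts
  have cca : (MvPowerSeries.constantCoeff : R →+* ℚ) (1 + x) ≠ 0 := by
    simp [map_add, map_one, cc_x]
  have ccb : (MvPowerSeries.constantCoeff : R →+* ℚ) (1 + y) ≠ 0 := by
    simp [map_add, map_one, cc_y]
  have ccc : (MvPowerSeries.constantCoeff : R →+* ℚ) (1 + x * y) ≠ 0 := by
    simp [map_add, map_one, map_mul, cc_x, cc_y]
  have ccd : (MvPowerSeries.constantCoeff : R →+* ℚ) (1 + x + y) ≠ 0 := by
    simp [map_add, map_one, cc_x, cc_y]
  have cce : (MvPowerSeries.constantCoeff : R →+* ℚ) (1 + x + x * y) ≠ 0 := by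
    simp [map_add, map_one, map_mul, cc_x, cc_y]
  -- cancellation facts
  have ha1 : (1 + x) * (1 + x)⁻¹ = 1 := MvPowerSeries.mul_inv_cancel _ cca
  have hb1 : (1 + y) * (1 + y)⁻¹ = 1 := MvPowerSeries.mul_inv_cancel _ ccb
  have hc1 : (1 + x * y) * (1 + x * y)⁻¹ = 1 := MvPowerSeries.mul_inv_cancel _ ccc
  have hd1 : (1 + x + y) * (1 + x + y)⁻¹ = 1 := MvPowerSeries.mul_inv_cancel _ ccd
  have he1 : (1 + x + x * y) * (1 + x + x * y)⁻¹ = 1 := MvPowerSeries.mul_inv_cancel _ cce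
  -- Step 2
  have e2x : T2 (x * (1 + y)⁻¹) = x * ((1 + x) * (1 + x + y)⁻¹) := by
    rw [map_mul, h2x, map_inv₁ T2 _ ccb, map_add, map_one, h2y]
    congr 1
    apply inv_eq_of_mul_eq_one
    linear_combination (y * (1 + x + y)⁻¹) * ha1 + hd1
  -- Step 3
  have t3a : T3 (1 + x) = 1 + x * (1 + y) := by rw [map_add, map_one, h3x]
  have t3d : T3 (1 + x + y) = (1 + x) * (1 + y) := by
    rw [map_add, map_add, map_one, h3x, h3y]; ring
  have hprodab : ((1 + x) * (1 + y))⁻¹ = (1 + x)⁻¹ * (1 + y)⁻¹ := by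
    apply inv_eq_of_mul_eq_one
    linear_combination ((1 + y) * (1 + y)⁻¹) * ha1 + hb1
  have e3x : T3 (x * ((1 + x) * (1 + x + y)⁻¹)) = x * ((1 + x + x * y) * (1 + x)⁻¹) := by
    rw [map_mul, map_mul, h3x, t3a, map_inv₁ T3 _ ccd, t3d, hprodab]
    linear_combination (x * (1 + x + x * y) * (1 + x)⁻¹) * hb1
  have e3y : T3 (y * (1 + x)⁻¹) = y * (1 + x + x * y)⁻¹ := by
    rw [map_mul, h3y, map_inv₁ T3 _ cca, t3a]
    have h : (1 : R) + x * (1 + y) = 1 + x + x * y := by ring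
    rw [h]
  -- Step 4
  have t4e : T4 (1 + x + x * y) = (1 + x) * (1 + x * y) := by
    rw [map_add, map_add, map_one, map_mul, h4x, h4y]; ring
  have hprodac : ((1 + x) * (1 + x * y))⁻¹ = (1 + x)⁻¹ * (1 + x * y)⁻¹ := by
    apply inv_eq_of_mul_eq_one
    linear_combination ((1 + x * y) * (1 + x * y)⁻¹) * ha1 + hc1
  have e4x : T4 (x * ((1 + x + x * y) * (1 + x)⁻¹)) = x * (1 + x * y) := by
    rw [map_mul, map_mul, h4x, t4e, map_inv₁ T4 _ cca, map_add, map_one, h4x]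
    linear_combination (x * (1 + x * y)) * ha1
  have e4y : T4 (y * (1 + x + x * y)⁻¹) = y * (1 + x * y)⁻¹ := by
    rw [map_mul, h4y, map_inv₁ T4 _ cce, t4e, hprodac]
    linear_combination (y * (1 + x * y)⁻¹) * ha1
  -- Step 5
  have t5c : T5 (1 + x * y) = 1 + x * y := by
    rw [map_add, map_one, map_mul, h5x, h5y]
    linear_combination (x * y) * hc1
  have e5x : T5 (x * (1 + x * y)) = x := by
    rw [map_mul, h5x, t5c]
    linear_combination x * hc1
  have e5y : T5 (y * (1 + x * y)⁻¹) = y := by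
    rw [map_mul, h5y, map_inv₁ T5 _ ccc, t5c]
    linear_combination y * hc1
  -- the composite fixes x and y
  have SX : (T5.comp (T4.comp (T3.comp (T2.comp T1)))) x = x := by
    simp only [AlgHom.comp_apply]
    rw [h1x, e2x, e3x, e4x, e5x]
  have SY : (T5.comp (T4.comp (T3.comp (T2.comp T1)))) y = y := by
    simp only [AlgHom.comp_apply]
    rw [h1y, h2y, e3y, e4y, e5y]
  -- continuity of the composite
  have cS : @Continuous R R coeffTopology coeffTopology
      (T5.comp (T4.comp (T3.comp (T2.comp T1)))) := by
    letI : TopologicalSpace R := coeffTopology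
    have hco : ⇑(T5.comp (T4.comp (T3.comp (T2.comp T1))))
        = ⇑T5 ∘ ⇑T4 ∘ ⇑T3 ∘ ⇑T2 ∘ ⇑T1 := rfl
    rw [hco]
    exact Continuous.comp c5 (Continuous.comp c4 (Continuous.comp c3
      (Continuous.comp c2 c1)))
  exact ⟨eq_id_of_fix _ cS SX SY, SX, SY⟩

end ScatteringWallCrossing
end
end

section
/- Let A = ℚ[x^{±1}, y^{±1}] be the ring of Laurent polynomials in two variables over ℚ (the group algebra of ℤ × ℤ over ℚ), let B = A[t] be the polynomial ring in one further variable t, and let I ⊆ B be the ideal generated by x²y − t and xy² − t. Then the quotient B/I is isomorphic as a ℚ-algebra to the ring ℚ[T^{±1}] of Laurent polynomials in one variable, via the map induced by x ↦ T, y ↦ T, t ↦ T³. -/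
namespace P2Mirror

/-- `A = ℚ[x^{±1}, y^{±1}]`, the group algebra of `ℤ × ℤ` over `ℚ`. -/
noncomputable abbrev A : Type := AddMonoidAlgebra ℚ (ℤ × ℤ)

/-- `B = A[t]`. -/
noncomputable abbrev B : Type := Polynomial A

/-- The Laurent monomial `x`. -/
noncomputable def x : B := Polynomial.C (AddMonoidAlgebra.single ((1, 0) : ℤ × ℤ) (1 : ℚ))

/-- The Laurent monomial `y`. -/
noncomputable def y : B := Polynomial.C (AddMonoidAlgebra.single ((0, 1) : ℤ × ℤ) (1 : ℚ))

/-- The extra variable `t`. -/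
noncomputable def t : B := Polynomial.X

/-- The ideal `I = (x²y − t, xy² − t)` of `B`, generated by the numerators of the partial
derivatives of the superpotential `W = x + y + t/(xy)` of the Landau–Ginzburg mirror to `ℙ²`. -/
noncomputable def I : Ideal B := Ideal.span {x ^ 2 * y - t, x * y ^ 2 - t}

open AddMonoidAlgebra Polynomial

/-- The additive map `(m,n) ↦ m+n`. -/
noncomputable def plus : ℤ × ℤ →+ ℤ := (AddMonoidHom.fst ℤ ℤ) + (AddMonoidHom.snd ℤ ℤ)

/-- `A → ℚ[T^{±}]`, `x ↦ T`, `y ↦ T`. -/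
noncomputable def f1 : A →ₐ[ℚ] AddMonoidAlgebra ℚ ℤ :=
  AddMonoidAlgebra.mapDomainAlgHom ℚ ℚ plus

noncomputable def φ : B →ₐ[ℚ] AddMonoidAlgebra ℚ ℤ :=
  Polynomial.aevalTower f1 (AddMonoidAlgebra.single (3 : ℤ) (1 : ℚ))

lemma f1_single (a : ℤ × ℤ) :
    f1 (AddMonoidAlgebra.single a (1:ℚ)) = AddMonoidAlgebra.single (a.1 + a.2) (1:ℚ) := by
  simp [f1, AddMonoidAlgebra.mapDomainAlgHom, plus, Finsupp.mapDomain_single]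

lemma φ_x : φ x = AddMonoidAlgebra.single (1:ℤ) (1:ℚ) := by
  rw [x, φ, Polynomial.aevalTower_C, f1_single]; norm_num

lemma φ_y : φ y = AddMonoidAlgebra.single (1:ℤ) (1:ℚ) := by
  rw [y, φ, Polynomial.aevalTower_C, f1_single]; norm_num

lemma φ_t : φ t = AddMonoidAlgebra.single (3:ℤ) (1:ℚ) := by
  rw [t, φ, Polynomial.aevalTower_X]

lemma φ_vanish : ∀ b ∈ I, φ b = 0 := by
  intro b hb
  have : I ≤ RingHom.ker (φ : B →+* AddMonoidAlgebra ℚ ℤ) := by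
    rw [I, Ideal.span_le]
    rintro c hc
    simp only [Set.mem_insert_iff, Set.mem_singleton_iff] at hc
    rcases hc with rfl | rfl <;>
    · rw [SetLike.mem_coe, RingHom.mem_ker]
      rw [AlgHom.coe_toRingHom, map_sub, map_mul, map_pow, φ_x, φ_y, φ_t, AddMonoidAlgebra.single_pow,
        AddMonoidAlgebra.single_mul_single]
      norm_num
  exact this hb


/-- The canonical unit of the group algebra attached to a group element. -/
noncomputable def SU {G : Type*} [AddGroup G] (g : G) : (AddMonoidAlgebra ℚ G)ˣ where
  val := AddMonoidAlgebra.single g 1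
  inv := AddMonoidAlgebra.single (-g) 1
  val_inv := by
    rw [AddMonoidAlgebra.single_mul_single, AddMonoidAlgebra.one_def]
    norm_num
  inv_val := by
    rw [AddMonoidAlgebra.single_mul_single, AddMonoidAlgebra.one_def]
    norm_num

/-- `x` as a unit of `B`. -/
noncomputable def xu : Bˣ := Units.map (Polynomial.C : A →+* B).toMonoidHom (SU (1, 0))

noncomputable def yu : Bˣ := Units.map (Polynomial.C : A →+* B).toMonoidHom (SU (0, 1))

lemma xu_val : (xu : B) = x := rfl
lemma yu_val : (yu : B) = y := rfl

/-- quotient map as monoid hom -/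
noncomputable def mkh : B →* B ⧸ I := (Ideal.Quotient.mk I).toMonoidHom

noncomputable instance : CommGroup (B ⧸ I)ˣ :=
  { (inferInstance : Group (B ⧸ I)ˣ) with
    mul_comm := fun a b => Units.ext (by
      show ((a * b : (B ⧸ I)ˣ) : B ⧸ I) = ((b * a : (B ⧸ I)ˣ) : B ⧸ I)
      rw [Units.val_mul, Units.val_mul]; exact mul_comm (a : B ⧸ I) (b : B ⧸ I)) }

noncomputable def u : (B ⧸ I)ˣ := Units.map mkh xu
noncomputable def v : (B ⧸ I)ˣ := Units.map mkh yu

lemma u_val : (u : B ⧸ I) = Ideal.Quotient.mk I x := rfl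
lemma v_val : (v : B ⧸ I) = Ideal.Quotient.mk I y := rfl

lemma mk_rel1 : Ideal.Quotient.mk I (x ^ 2 * y) = Ideal.Quotient.mk I t := by
  rw [← sub_eq_zero, ← map_sub, Ideal.Quotient.eq_zero_iff_mem]
  exact Ideal.subset_span (by left; rfl)

lemma mk_rel2 : Ideal.Quotient.mk I (x * y ^ 2) = Ideal.Quotient.mk I t := by
  rw [← sub_eq_zero, ← map_sub, Ideal.Quotient.eq_zero_iff_mem]
  exact Ideal.subset_span (by right; rfl)

lemma u_eq_v : u = v := by
  have h : u ^ 2 * v = u * v ^ 2 := by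
    apply Units.ext
    push_cast [u_val, v_val]
    rw [← map_pow, ← map_mul, ← map_pow, ← map_mul, mk_rel1, mk_rel2]
  have h2 : u * (u * v) = v * (u * v) := by
    calc u * (u * v) = u ^ 2 * v := by rw [← mul_assoc, ← sq]
      _ = u * v ^ 2 := h
      _ = v * (u * v) := by rw [← mul_assoc, mul_comm v u, mul_assoc, ← sq]
  exact mul_right_cancel h2

lemma mk_t : Ideal.Quotient.mk I t = ((u ^ 3 : (B ⧸ I)ˣ) : B ⧸ I) := by
  have := mk_rel1
  rw [map_mul, map_pow] at this
  rw [← this]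
  have hv : Ideal.Quotient.mk I y = (u : B ⧸ I) := by rw [u_eq_v]; rfl
  rw [hv, ← u_val, ← Units.val_pow_eq_pow_val, ← Units.val_mul, ← pow_succ]


/-- `SU` as a monoid hom. -/
noncomputable def SUhom {G : Type*} [AddGroup G] :
    Multiplicative G →* (AddMonoidAlgebra ℚ G)ˣ where
  toFun a := SU a.toAdd
  map_one' := Units.ext (by
    show AddMonoidAlgebra.single ((1:Multiplicative G).toAdd) (1:ℚ) = 1
    rw [AddMonoidAlgebra.one_def]; simp)
  map_mul' a b := Units.ext (by
    show AddMonoidAlgebra.single ((a*b).toAdd) (1:ℚ)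
      = AddMonoidAlgebra.single a.toAdd 1 * AddMonoidAlgebra.single b.toAdd 1
    rw [AddMonoidAlgebra.single_mul_single]; simp)

lemma SU_zpow {G : Type*} [AddGroup G] (g : G) (n : ℤ) :
    ((SU g ^ n : (AddMonoidAlgebra ℚ G)ˣ) : AddMonoidAlgebra ℚ G)
      = AddMonoidAlgebra.single (n • g) 1 := by
  have h1 : SU g = SUhom (Multiplicative.ofAdd g) := rfl
  rw [h1, ← map_zpow, ← ofAdd_zsmul]
  rfl

noncomputable def ψ : AddMonoidAlgebra ℚ ℤ →ₐ[ℚ] B ⧸ I :=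
  AddMonoidAlgebra.lift ℚ (B ⧸ I) ℤ ((Units.coeHom _).comp (zpowersHom _ u))

lemma ψ_single (n : ℤ) :
    ψ (AddMonoidAlgebra.single n (1:ℚ)) = ((u ^ n : (B ⧸ I)ˣ) : B ⧸ I) := by
  rw [ψ, AddMonoidAlgebra.lift_single]
  simp

noncomputable def φbar : B ⧸ I →ₐ[ℚ] AddMonoidAlgebra ℚ ℤ :=
  Ideal.Quotient.liftₐ I φ φ_vanish

lemma φbar_mk (b : B) : φbar (Ideal.Quotient.mk I b) = φ b := by
  rw [φbar, Ideal.Quotient.liftₐ_apply]; rfl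

lemma h1 : φbar.comp ψ = AlgHom.id ℚ (AddMonoidAlgebra ℚ ℤ) := by
  apply AddMonoidAlgebra.algHom_ext
  intro n
  rw [AlgHom.comp_apply, ψ_single, AlgHom.id_apply]
  have hmap : φbar ((u ^ n : (B ⧸ I)ˣ) : B ⧸ I)
      = ((Units.map (φbar : B ⧸ I →* AddMonoidAlgebra ℚ ℤ) (u ^ n) :
          (AddMonoidAlgebra ℚ ℤ)ˣ) : AddMonoidAlgebra ℚ ℤ) := rfl
  rw [hmap, map_zpow]
  have hu : Units.map (φbar : B ⧸ I →* AddMonoidAlgebra ℚ ℤ) u = SU (1:ℤ) := by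
    apply Units.ext
    show φbar ((u : B ⧸ I)) = AddMonoidAlgebra.single (1:ℤ) (1:ℚ)
    rw [u_val, φbar_mk, φ_x]
  rw [hu, SU_zpow]
  norm_num
  exact Subsingleton.elim _ _

lemma mk_C_single (a : ℤ × ℤ) :
    Ideal.Quotient.mk I (Polynomial.C (AddMonoidAlgebra.single a (1:ℚ)))
      = ((u ^ (a.1 + a.2) : (B ⧸ I)ˣ) : B ⧸ I) := by
  set Q : Multiplicative (ℤ × ℤ) →* (B ⧸ I)ˣ :=
    (Units.map mkh).comp ((Units.map (Polynomial.C : A →+* B).toMonoidHom).comp SUhom) with hQ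
  have key : Ideal.Quotient.mk I (Polynomial.C (AddMonoidAlgebra.single a (1:ℚ)))
      = ((Q (Multiplicative.ofAdd a) : (B ⧸ I)ˣ) : B ⧸ I) := rfl
  have ha : a = a.1 • ((1,0) : ℤ × ℤ) + a.2 • ((0,1) : ℤ × ℤ) := by
    apply Prod.ext <;> simp
  have hQ1 : Q (Multiplicative.ofAdd ((1,0) : ℤ × ℤ)) = u := rfl
  have hQ2 : Q (Multiplicative.ofAdd ((0,1) : ℤ × ℤ)) = v := rfl
  have hofAdd : (Multiplicative.ofAdd a)
      = Multiplicative.ofAdd ((1,0) : ℤ × ℤ) ^ a.1 * Multiplicative.ofAdd ((0,1) : ℤ × ℤ) ^ a.2 := by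
    rw [← ofAdd_zsmul, ← ofAdd_zsmul, ← ofAdd_add]
    exact congrArg _ ha
  rw [key, hofAdd, map_mul, map_zpow, map_zpow, hQ1, hQ2, ← u_eq_v, ← zpow_add]

lemma h2 : ψ.comp φbar = AlgHom.id ℚ (B ⧸ I) := by
  apply Ideal.Quotient.algHom_ext
  apply Polynomial.algHom_ext'
  · apply AddMonoidAlgebra.algHom_ext
    intro a
    show ψ (φbar (Ideal.Quotient.mk I (Polynomial.C (AddMonoidAlgebra.single a 1))))
      = Ideal.Quotient.mk I (Polynomial.C (AddMonoidAlgebra.single a 1))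
    rw [φbar_mk, φ, Polynomial.aevalTower_C, f1_single, ψ_single, mk_C_single]
    exact Subsingleton.elim _ _
  · show ψ (φbar (Ideal.Quotient.mk I Polynomial.X)) = Ideal.Quotient.mk I Polynomial.X
    rw [φbar_mk]
    have : φ Polynomial.X = AddMonoidAlgebra.single (3:ℤ) (1:ℚ) := φ_t
    rw [this, ψ_single, show Polynomial.X = t from rfl, mk_t]
    norm_cast

/-- The Jacobian ring `B/I` of the mirror to `ℙ²` is isomorphic as a
`ℚ`-algebra to the Laurent polynomial ring `ℚ[T^{±1}]` via `x ↦ T`, `y ↦ T`, `t ↦ T³`;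
this is the quantum cohomology `ℚ[X, z]/⟨X³ − z⟩` of `ℙ²` with `z` inverted fibrewise. -/
theorem P2_jacobian_ring_iso_laurent :
    ∃ e : (B ⧸ I) ≃ₐ[ℚ] AddMonoidAlgebra ℚ ℤ,
      e (Ideal.Quotient.mk I x) = AddMonoidAlgebra.single (1 : ℤ) (1 : ℚ) ∧
      e (Ideal.Quotient.mk I y) = AddMonoidAlgebra.single (1 : ℤ) (1 : ℚ) ∧
      e (Ideal.Quotient.mk I t) = AddMonoidAlgebra.single (3 : ℤ) (1 : ℚ) := by
  refine ⟨AlgEquiv.ofAlgHom φbar ψ h1 h2, ?_, ?_, ?_⟩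
  · show φbar (Ideal.Quotient.mk I x) = _
    rw [φbar_mk, φ_x]
  · show φbar (Ideal.Quotient.mk I y) = _
    rw [φbar_mk, φ_y]
  · show φbar (Ideal.Quotient.mk I t) = _
    rw [φbar_mk, φ_t]



end P2Mirror
end

section
/- Let G be an additive commutative group, M ⊆ G an additive submonoid, N an additive commutative monoid, and φ : N → G a function with φ(0) = 0 and such that for all p, q ∈ N one has φ(p) + φ(q) − φ(p+q) ∈ M. Then Γ := {(p, g) ∈ N × G : g − φ(p) ∈ M} is an additive submonoid of N × G containing (p, φ(p)) for every p ∈ N and containing (0, m) for every m ∈ M. Moreover, for any field k, in the monoid algebra k[Γ] the elements ϑ_p := z^{(p, φ(p))} satisfy the product rule ϑ_p · ϑ_q = z^{(0, c(p,q))} · ϑ_{p+q}, where c(p,q) = φ(p) + φ(q) − φ(p+q) ∈ M and z^γ denotes the basis element of k[Γ] indexed by γ ∈ Γ. -/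
noncomputable section

namespace ToricTheta

variable {G : Type*} [AddCommGroup G] {N : Type*} [AddCommMonoid N]

/-- The graph monoid `Γ = {(p, g) ∈ N × G : g − φ(p) ∈ M}` associated to a "convex"
function `φ : N → G` relative to a submonoid `M ⊆ G`; the fact that this is a submonoid of
`N × G` is part of the statement being formalized. -/
def graphMonoid (M : AddSubmonoid G) (φ : N → G) (hφ0 : φ 0 = 0)
    (hφ : ∀ p q : N, φ p + φ q - φ (p + q) ∈ M) : AddSubmonoid (N × G) where
  carrier := {pg | pg.2 - φ pg.1 ∈ M}
  zero_mem' := by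
    simp only [Set.mem_setOf_eq, Prod.fst_zero, Prod.snd_zero, hφ0, sub_zero]
    exact M.zero_mem
  add_mem' := by
    intro a b ha hb
    have h := M.add_mem (M.add_mem ha hb) (hφ a.1 b.1)
    have key : (a + b).2 - φ ((a + b).1)
        = a.2 - φ a.1 + (b.2 - φ b.1) + (φ a.1 + φ b.1 - φ (a.1 + b.1)) := by
      simp only [Prod.fst_add, Prod.snd_add]; abel
    simpa only [Set.mem_setOf_eq, key] using h

/-- The theta function `ϑ_p = z^{(p, φ(p))}` in the monoid algebra `k[Γ]`. -/
def theta (k : Type*) [Field k] (M : AddSubmonoid G) (φ : N → G) (hφ0 : φ 0 = 0)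
    (hφ : ∀ p q : N, φ p + φ q - φ (p + q) ∈ M) (p : N) :
    AddMonoidAlgebra k (graphMonoid M φ hφ0 hφ) :=
  AddMonoidAlgebra.single
    ⟨(p, φ p), by
      show φ p - φ p ∈ M
      rw [sub_self]; exact M.zero_mem⟩ 1

/-- Let `M ⊆ G` be a submonoid, `φ : N → G` with `φ(0) = 0` and
`φ(p) + φ(q) − φ(p+q) ∈ M` for all `p, q`.  Then the graph monoid
`Γ = {(p,g) : g − φ(p) ∈ M}` (an additive submonoid of `N × G`, see `graphMonoid`)
contains `(p, φ(p))` for every `p ∈ N` and `(0, m)` for every `m ∈ M`, and in the monoid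
algebra `k[Γ]` the theta functions `ϑ_p = z^{(p,φ(p))}` satisfy the product rule
`ϑ_p · ϑ_q = z^{(0, φ(p)+φ(q)−φ(p+q))} · ϑ_{p+q}`.  This is the multiplication rule
`ϑ_P ϑ_Q = z^{c(P,Q)} ϑ_{P+Q}` of the toric mirror construction. -/
theorem theta_product_rule (k : Type*) [Field k]
    (M : AddSubmonoid G) (φ : N → G) (hφ0 : φ 0 = 0)
    (hφ : ∀ p q : N, φ p + φ q - φ (p + q) ∈ M) :
    (∀ p : N, (p, φ p) ∈ graphMonoid M φ hφ0 hφ) ∧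
      (∀ m ∈ M, ((0 : N), m) ∈ graphMonoid M φ hφ0 hφ) ∧
      (∀ p q : N,
        theta k M φ hφ0 hφ p * theta k M φ hφ0 hφ q =
          AddMonoidAlgebra.single
              (⟨((0 : N), φ p + φ q - φ (p + q)), by
                  show φ p + φ q - φ (p + q) - φ 0 ∈ M
                  rw [hφ0, sub_zero]; exact hφ p q⟩ :
                graphMonoid M φ hφ0 hφ) 1 *
            theta k M φ hφ0 hφ (p + q)) := by
  refine ⟨fun p => by show φ p - φ p ∈ M; rw [sub_self]; exact M.zero_mem,
    fun m hm => by show m - φ 0 ∈ M; rw [hφ0, sub_zero]; exact hm,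
    fun p q => ?_⟩
  unfold theta
  rw [AddMonoidAlgebra.single_mul_single, AddMonoidAlgebra.single_mul_single, one_mul]
  congr 1
  apply Subtype.ext
  apply Prod.ext
  · show p + q = 0 + (p + q); rw [zero_add]
  · show φ p + φ q = φ p + φ q - φ (p + q) + φ (p + q); abel

end ToricTheta
end
end

section
/- Let G be an additive commutative group, M ⊆ G an additive submonoid, N an additive commutative monoid, φ : N → G a function with φ(0) = 0 and φ(p) + φ(q) − φ(p+q) ∈ M for all p, q ∈ N, and let Γ = {(p, g) ∈ N × G : g − φ(p) ∈ M}, an additive submonoid of N × G. Let k be a field. Via the monoid embedding M → Γ, m ↦ (0, m), the monoid algebra k[Γ] is an algebra over the monoid algebra k[M], and as a k[M]-module it is free with basis the family {ϑ_p := z^{(p,φ(p))} : p ∈ N}, where z^γ denotes the basis element of k[Γ] indexed by γ ∈ Γ. -/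
noncomputable section

namespace ToricTheta

variable {G : Type*} [AddCommGroup G] {N : Type*} [AddCommMonoid N]

/-- The monoid embedding `M → Γ`, `m ↦ (0, m)`. -/
def inclM (M : AddSubmonoid G) (φ : N → G) (hφ0 : φ 0 = 0)
    (hφ : ∀ p q : N, φ p + φ q - φ (p + q) ∈ M) :
    M →+ graphMonoid M φ hφ0 hφ where
  toFun m := ⟨((0 : N), (m : G)), by
    show (m : G) - φ 0 ∈ M
    rw [hφ0, sub_zero]; exact m.2⟩
  map_zero' := by ext <;> rfl
  map_add' m m' := by
    apply Subtype.ext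
    apply Prod.ext <;> simp


section Aux

variable (k : Type*) [Field k] (M : AddSubmonoid G) (φ : N → G) (hφ0 : φ 0 = 0)
    (hφ : ∀ p q : N, φ p + φ q - φ (p + q) ∈ M)

theorem theta_basis_aux
    [inst : Algebra (AddMonoidAlgebra k M) (AddMonoidAlgebra k (graphMonoid M φ hφ0 hφ))]
    (hinst : ∀ (r : AddMonoidAlgebra k M)
        (x : AddMonoidAlgebra k (graphMonoid M φ hφ0 hφ)),
        r • x = AddMonoidAlgebra.mapDomainRingHom k (inclM M φ hφ0 hφ) r * x) :
    ∃ b : Module.Basis N (AddMonoidAlgebra k M) (AddMonoidAlgebra k (graphMonoid M φ hφ0 hφ)),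
      ∀ p : N, b p = theta k M φ hφ0 hφ p := by
  classical
  -- bijection (graphMonoid M φ hφ0 hφ) ≃ N × M
  let e : (graphMonoid M φ hφ0 hφ) ≃ N × M :=
  { toFun := fun γ => (γ.1.1, ⟨γ.1.2 - φ γ.1.1, γ.2⟩)
    invFun := fun pm => ⟨(pm.1, (pm.2 : G) + φ pm.1), by
      show (pm.2 : G) + φ pm.1 - φ pm.1 ∈ M
      simp only [add_sub_cancel_right]; exact pm.2.2⟩
    left_inv := fun γ => by
      apply Subtype.ext; apply Prod.ext
      · rfl
      · show γ.1.2 - φ γ.1.1 + φ γ.1.1 = γ.1.2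
        simp
    right_inv := fun pm => by
      apply Prod.ext
      · rfl
      · apply Subtype.ext
        show (pm.2 : G) + φ pm.1 - φ pm.1 = pm.2
        simp }
  let E0 : AddMonoidAlgebra k (graphMonoid M φ hφ0 hφ) ≃ₗ[k] (N →₀ AddMonoidAlgebra k M) :=
    (AddMonoidAlgebra.coeffLinearEquiv k).trans
    ((Finsupp.domLCongr e : ((graphMonoid M φ hφ0 hφ) →₀ k) ≃ₗ[k] (N × M →₀ k)).trans
      ((Finsupp.finsuppProdLEquiv k).trans
        (Finsupp.mapRange.linearEquiv (AddMonoidAlgebra.coeffLinearEquiv k).symm)))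
  have hE0 : ∀ (γ : (graphMonoid M φ hφ0 hφ)) (c : k), E0 (AddMonoidAlgebra.single γ c)
      = Finsupp.single γ.1.1 (AddMonoidAlgebra.single (⟨γ.1.2 - φ γ.1.1, γ.2⟩ : M) c) := by
    intro γ c
    show Finsupp.mapRange.linearEquiv (AddMonoidAlgebra.coeffLinearEquiv k).symm
      (Finsupp.finsuppProdLEquiv k (Finsupp.domLCongr e (Finsupp.single γ c))) = _
    rw [Finsupp.domLCongr_single]
    show Finsupp.mapRange.linearEquiv (AddMonoidAlgebra.coeffLinearEquiv k).symm
      (Finsupp.curryLinearEquiv k (Finsupp.single (e γ) c)) = _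
    rw [Finsupp.curryLinearEquiv_apply, Finsupp.curry_single]
    exact Finsupp.mapRange_single (hf := map_zero _)
  -- pointwise scalar multiplication on `N →₀ k[M]` on singles
  have hsm : ∀ (r : AddMonoidAlgebra k M) (a : N) (v : AddMonoidAlgebra k M),
      r • (Finsupp.single a v : N →₀ AddMonoidAlgebra k M) = Finsupp.single a (r * v) := by
    intro r a v
    ext n : 1
    rw [Finsupp.smul_apply]
    rcases eq_or_ne a n with rfl | h
    · rw [Finsupp.single_eq_same, Finsupp.single_eq_same, smul_eq_mul]
    · rw [Finsupp.single_eq_of_ne' h, Finsupp.single_eq_of_ne' h, smul_zero]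
  -- compatibility on singles
  have key : ∀ (m : M) (c : k) (γ : (graphMonoid M φ hφ0 hφ)) (d : k),
      E0 ((AddMonoidAlgebra.single m c : AddMonoidAlgebra k M) • (AddMonoidAlgebra.single γ d))
        = (AddMonoidAlgebra.single m c : AddMonoidAlgebra k M)
            • E0 (AddMonoidAlgebra.single γ d) := by
    intro m c γ d
    have halg : (AddMonoidAlgebra.single m c : AddMonoidAlgebra k M)
          • (AddMonoidAlgebra.single γ d : AddMonoidAlgebra k (graphMonoid M φ hφ0 hφ))
        = AddMonoidAlgebra.single (inclM M φ hφ0 hφ m + γ) (c * d) := by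
      rw [hinst]
      have hmap : (AddMonoidAlgebra.mapDomainRingHom k (inclM M φ hφ0 hφ))
            (AddMonoidAlgebra.single m c)
          = AddMonoidAlgebra.single (inclM M φ hφ0 hφ m) c := by
        show AddMonoidAlgebra.mapDomain (inclM M φ hφ0 hφ) (AddMonoidAlgebra.single m c) = _
        rw [AddMonoidAlgebra.mapDomain_single]
      rw [hmap]
      exact AddMonoidAlgebra.single_mul_single _ _ _ _
    rw [halg, hE0, hE0, hsm]
    have h2 : (⟨((inclM M φ hφ0 hφ m + γ : (graphMonoid M φ hφ0 hφ)) : N × G).2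
          - φ ((inclM M φ hφ0 hφ m + γ : (graphMonoid M φ hφ0 hφ)) : N × G).1,
        (inclM M φ hφ0 hφ m + γ).2⟩ : M) = m + ⟨γ.1.2 - φ γ.1.1, γ.2⟩ := by
      apply Subtype.ext
      show (m : G) + γ.1.2 - φ ((0 : N) + γ.1.1) = (m : G) + (γ.1.2 - φ γ.1.1)
      rw [zero_add, add_sub_assoc]
    rw [h2]
    have h1 : ((inclM M φ hφ0 hφ m + γ : (graphMonoid M φ hφ0 hφ)) : N × G).1 = γ.1.1 := zero_add _
    rw [h1]
    congr 1
    exact (AddMonoidAlgebra.single_mul_single _ _ _ _).symm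
  have key2 : ∀ (m : M) (c : k) (x : AddMonoidAlgebra k (graphMonoid M φ hφ0 hφ)),
      E0 ((AddMonoidAlgebra.single m c : AddMonoidAlgebra k M) • x)
        = (AddMonoidAlgebra.single m c : AddMonoidAlgebra k M) • E0 x := by
    intro m c x
    induction x using AddMonoidAlgebra.induction with
    | zero => simp
    | single_add γ d f _ _ ih =>
      rw [smul_add, map_add, map_add, smul_add, ih]
      congr 1
      exact key m c γ d
  have hsmul : ∀ (r : AddMonoidAlgebra k M) (x : AddMonoidAlgebra k (graphMonoid M φ hφ0 hφ)),
      E0 (r • x) = r • E0 x := by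
    intro r x
    induction r using AddMonoidAlgebra.induction with
    | zero => simp
    | single_add m c g _ _ ih =>
      rw [add_smul, map_add, add_smul, ih]
      congr 1
      exact key2 m c x
  let E : AddMonoidAlgebra k (graphMonoid M φ hφ0 hφ) ≃ₗ[AddMonoidAlgebra k M] (N →₀ AddMonoidAlgebra k M) :=
    { E0.toAddEquiv with map_smul' := hsmul }
  refine ⟨Module.Basis.ofRepr E, fun p => ?_⟩
  have hEθ : E (theta k M φ hφ0 hφ p) = Finsupp.single p 1 := by
    show E0 (theta k M φ hφ0 hφ p) = Finsupp.single p 1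
    rw [theta, hE0]
    congr 1
    have h0 : (⟨φ p - φ p, by rw [sub_self]; exact M.zero_mem⟩ : M) = 0 := by
      apply Subtype.ext; exact sub_self _
    rw [h0]
    rfl
  have hb : E.symm (Finsupp.single p 1) = (Module.Basis.ofRepr E) p :=
    Module.Basis.repr_symm_single_one (Module.Basis.ofRepr E) p
  rw [← hb, ← hEθ, E.symm_apply_apply]

end Aux

/-- With `Γ` the graph monoid of `φ : N → G` relative to `M ⊆ G`, the
monoid algebra `k[Γ]` is an algebra over `k[M]` via the embedding `M → Γ`, `m ↦ (0, m)`,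
and as a `k[M]`-module it is free with basis the theta functions `{ϑ_p : p ∈ N}`.
This is the claim that the theta functions form a `k[NE(S)]`-basis of the ring of
functions on the (uncorrected, toric) mirror family over `Spec k[NE(S)]`. -/
theorem theta_basis (k : Type*) [Field k]
    (M : AddSubmonoid G) (φ : N → G) (hφ0 : φ 0 = 0)
    (hφ : ∀ p q : N, φ p + φ q - φ (p + q) ∈ M) :
    letI : Algebra (AddMonoidAlgebra k M) (AddMonoidAlgebra k (graphMonoid M φ hφ0 hφ)) :=
      (AddMonoidAlgebra.mapDomainRingHom k (inclM M φ hφ0 hφ)).toAlgebra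
    ∃ b : Module.Basis N (AddMonoidAlgebra k M) (AddMonoidAlgebra k (graphMonoid M φ hφ0 hφ)),
      ∀ p : N, b p = theta k M φ hφ0 hφ p := by
  exact theta_basis_aux k M φ hφ0 hφ
    (inst := (AddMonoidAlgebra.mapDomainRingHom k (inclM M φ hφ0 hφ)).toAlgebra)
    (fun r x => rfl)

end ToricTheta
end
end
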